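/- arXiv:1710.01572 — 7 statements merged into one kernel-verified Lean document; each statement's English description precedes it below -/
import Mathlib

section
/- Let p be a prime, λ > 0 an integer, and y an integer with y > 0 or y < 1 - λ. Then λ/(p-1) - ⌈log_p(λ)⌉ - 1 ≤ Σ_{i=0}^{λ-1} v_p(y+i) ≤ (λ-1)/(p-1) + max{⌊log_p|y|⌋, ⌊log_p|y+λ-1|⌋}, where v_p denotes the p-adic valuation. -/
lemma aux_ediv_step (m b : ℤ) (hm : 0 < m) :
    b / m - (b - 1) / m = if m ∣ b then 1 else 0 := by
  have h := Int.mul_ediv_add_emod b m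
  have h0 : 0 ≤ b % m := Int.emod_nonneg b hm.ne'
  have h1 : b % m < m := Int.emod_lt_of_pos b hm
  by_cases hd : m ∣ b
  · simp only [hd, if_true]
    have hr : b % m = 0 := Int.emod_eq_zero_of_dvd hd
    have hb1 : (b - 1) / m = b / m - 1 := by
      have : b - 1 = (m - 1) + (b / m - 1) * m := by
        rw [hr] at h; linarith [h]
      rw [this, Int.add_mul_ediv_right _ _ hm.ne', Int.ediv_eq_zero_of_lt (by linarith) (by linarith)]
      ring
    rw [hb1]; ring
  · simp only [hd, if_false]
    have hr : b % m ≠ 0 := fun hc => hd (Int.dvd_of_emod_eq_zero hc)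
    have hb1 : (b - 1) / m = b / m := by
      have : b - 1 = (b % m - 1) + (b / m) * m := by linarith [h]
      rw [this, Int.add_mul_ediv_right _ _ hm.ne', Int.ediv_eq_zero_of_lt (by omega) (by omega)]
      ring
    rw [hb1]; ring

lemma aux_count (m y : ℤ) (hm : 0 < m) (L : ℕ) :
    (((Finset.range L).filter (fun (i : ℕ) => m ∣ y + (i : ℤ))).card : ℤ)
      = (y + L - 1) / m - (y - 1) / m := by
  induction L with
  | zero => simp
  | succ n ih =>
    rw [Finset.range_add_one, Finset.filter_insert]
    have step := aux_ediv_step m (y + n) hm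
    have e1 : y + ((n : ℤ) + 1) - 1 = y + n := by ring
    by_cases hd : m ∣ y + (n : ℤ)
    · rw [if_pos hd, Finset.card_insert_of_notMem (by simp)]
      push_cast
      rw [if_pos hd] at step
      rw [e1]
      omega
    · rw [if_neg hd]
      push_cast
      rw [if_neg hd] at step
      rw [e1]
      omega

lemma aux_count_bounds (m y : ℤ) (hm : 0 < m) (L : ℕ) :
    (L : ℤ) - m + 1 ≤ m * (((Finset.range L).filter (fun (i : ℕ) => m ∣ y + (i : ℤ))).card : ℤ)
    ∧ m * (((Finset.range L).filter (fun (i : ℕ) => m ∣ y + (i : ℤ))).card : ℤ) ≤ (L : ℤ) + m - 1 := by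
  rw [aux_count m y hm L, mul_sub]
  have ha := Int.mul_ediv_add_emod (y - 1) m
  have hb := Int.mul_ediv_add_emod (y + L - 1) m
  have ha0 : 0 ≤ (y - 1) % m := Int.emod_nonneg _ hm.ne'
  have ha1 : (y - 1) % m < m := Int.emod_lt_of_pos _ hm
  have hb0 : 0 ≤ (y + L - 1) % m := Int.emod_nonneg _ hm.ne'
  have hb1 : (y + L - 1) % m < m := Int.emod_lt_of_pos _ hm
  constructor <;> linarith

lemma aux_val_card (p : ℕ) (hp : p.Prime) (n : ℤ) (hn : n ≠ 0) (J : ℕ) :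
    ((Finset.Icc 1 J).filter (fun j => (p : ℤ) ^ j ∣ n)).card = min (padicValInt p n) J := by
  haveI := Fact.mk hp
  have hiff : ∀ j : ℕ, ((p : ℤ) ^ j ∣ n ↔ j ≤ padicValInt p n) := by
    intro j
    rw [padicValInt_dvd_iff]
    simp [hn]
  have : (Finset.Icc 1 J).filter (fun j => (p : ℤ) ^ j ∣ n)
      = Finset.Icc 1 (min (padicValInt p n) J) := by
    ext j
    simp only [Finset.mem_filter, Finset.mem_Icc, hiff]
    omega
  rw [this, Nat.card_Icc]
  omega

lemma aux_val_le (p : ℕ) (hp : p.Prime) (n : ℤ) (hn : n ≠ 0) :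
    (padicValInt p n : ℝ) ≤ Real.logb p |(n : ℝ)| := by
  haveI := Fact.mk hp
  have hq1 : (1 : ℝ) < p := by exact_mod_cast hp.one_lt
  have hdvd : (p : ℤ) ^ padicValInt p n ∣ n := padicValInt_dvd n
  have hle : (p : ℤ) ^ padicValInt p n ≤ |n| :=
    Int.le_of_dvd (abs_pos.mpr hn) ((dvd_abs _ _).mpr hdvd)
  have hler : (p : ℝ) ^ padicValInt p n ≤ |(n : ℝ)| := by
    rw [← Int.cast_abs]
    exact_mod_cast hle
  have hnr : ((n:ℝ)) ≠ 0 := by exact_mod_cast hn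
  have h2 : Real.logb p ((p:ℝ) ^ padicValInt p n) ≤ Real.logb p |(n : ℝ)| :=
    (Real.logb_le_logb hq1 (pow_pos (by linarith) _) (abs_pos.mpr hnr)).mpr hler
  rwa [Real.logb_pow, Real.logb_self_eq_one hq1, mul_one] at h2

lemma aux_geom (q : ℝ) (hq : 0 < q) (K : ℕ) :
    (q - 1) * ∑ j ∈ Finset.Icc 1 K, (1 / q) ^ j = 1 - (1 / q) ^ K := by
  induction K with
  | zero => simp
  | succ n ih =>
    rw [Finset.sum_Icc_succ_top (by omega), mul_add, ih]
    have h1 : (1 / q) ^ (n + 1) * q = (1 / q) ^ n := by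
      rw [pow_succ]
      field_simp
    nlinarith [h1, mul_comm q (q ^ n)]


/-- For a prime p, an integer λ = L > 0, and an integer y with
y > 0 or y < 1 - L, the sum of p-adic valuations of y, y+1, ..., y+L-1 satisfies
L/(p-1) - ⌈log_p L⌉ - 1 ≤ Σ v_p(y+i) ≤ (L-1)/(p-1) + max{⌊log_p|y|⌋, ⌊log_p|y+L-1|⌋}. -/
theorem stmt0 (p : ℕ) (hp : p.Prime) (L : ℕ) (hL : 0 < L) (y : ℤ)
    (hy : 0 < y ∨ y < 1 - (L : ℤ)) :
    (L : ℝ) / ((p : ℝ) - 1) - (⌈Real.logb p L⌉ : ℝ) - 1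
      ≤ ∑ i ∈ Finset.range L, (padicValInt p (y + i) : ℝ) ∧
    ∑ i ∈ Finset.range L, (padicValInt p (y + i) : ℝ)
      ≤ ((L : ℝ) - 1) / ((p : ℝ) - 1)
        + max ((⌊Real.logb p |(y : ℝ)|⌋ : ℝ)) ((⌊Real.logb p |(y : ℝ) + (L : ℝ) - 1|⌋ : ℝ)) := by
  haveI := Fact.mk hp
  have hq1 : (1 : ℝ) < p := by exact_mod_cast hp.one_lt
  have hq0 : (0 : ℝ) < p := lt_trans one_pos hq1
  have hp1 : (0 : ℝ) < (p : ℝ) - 1 := by linarith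
  set c : ℕ → ℕ := fun j => ((Finset.range L).filter (fun (i : ℕ) => (p:ℤ)^j ∣ y + (i:ℤ))).card
    with hc
  have hne : ∀ i : ℕ, i < L → y + (i : ℤ) ≠ 0 := by
    intro i hi; rcases hy with h | h <;> omega
  have main_id : ∀ J : ℕ, ∑ j ∈ Finset.Icc 1 J, c j
      = ∑ i ∈ Finset.range L, min (padicValInt p (y + (i:ℤ))) J := by
    intro J
    have swap : ∑ j ∈ Finset.Icc 1 J, c j
        = ∑ i ∈ Finset.range L, ((Finset.Icc 1 J).filter (fun j => (p:ℤ)^j ∣ y + (i:ℤ))).card := by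
      simp_rw [hc, Finset.card_filter]
      exact Finset.sum_comm
    rw [swap]
    exact Finset.sum_congr rfl fun i hi =>
      aux_val_card p hp _ (hne i (Finset.mem_range.mp hi)) J
  have hcount := fun (j : ℕ) =>
    aux_count_bounds ((p:ℤ)^j) y (pow_pos (by exact_mod_cast hq0) j) L
  have hpj : ∀ j : ℕ, (0:ℝ) < (p:ℝ)^j := fun j => pow_pos hq0 j
  have hcu : ∀ j : ℕ, (c j : ℝ) ≤ ((L:ℝ) - 1) * (1/p)^j + 1 := by
    intro j
    have h := (hcount j).2
    simp only [hc]
    have hr : (p:ℝ)^j * ((((Finset.range L).filter (fun (i : ℕ) => (p:ℤ)^j ∣ y + (i:ℤ))).card : ℕ) : ℝ)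
        ≤ (L:ℝ) + (p:ℝ)^j - 1 := by exact_mod_cast h
    rw [mul_comm] at hr
    rw [show ((L:ℝ) - 1) * (1/p)^j + 1 = ((L:ℝ) + (p:ℝ)^j - 1) / (p:ℝ)^j by
      rw [eq_div_iff (hpj j).ne', add_mul, mul_assoc, ← mul_pow, one_div, inv_mul_cancel₀ hq0.ne', one_pow]; ring, le_div_iff₀ (hpj j)]
    linarith
  have hcl : ∀ j : ℕ, (L:ℝ) * (1/p)^j - 1 ≤ (c j : ℝ) := by
    intro j
    have h := (hcount j).1
    simp only [hc]
    have hr : (L:ℝ) - (p:ℝ)^j + 1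
        ≤ (p:ℝ)^j * ((((Finset.range L).filter (fun (i : ℕ) => (p:ℤ)^j ∣ y + (i:ℤ))).card : ℕ) : ℝ) := by
      exact_mod_cast h
    rw [mul_comm] at hr
    rw [show (L:ℝ) * (1/p)^j - 1 = ((L:ℝ) - (p:ℝ)^j) / (p:ℝ)^j by
      rw [eq_div_iff (hpj j).ne', sub_mul, mul_assoc, ← mul_pow, one_div, inv_mul_cancel₀ hq0.ne', one_pow]; ring, div_le_iff₀ (hpj j)]
    linarith
  constructor
  · -- lower bound
    have hlogL : 0 ≤ Real.logb p L := Real.logb_nonneg hq1 (by exact_mod_cast hL)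
    have hcl0 : 0 ≤ ⌈Real.logb p (L:ℝ)⌉ := Int.ceil_nonneg hlogL
    set K := (⌈Real.logb p (L:ℝ)⌉).toNat with hK
    have hKr : (K:ℝ) = (⌈Real.logb p (L:ℝ)⌉ : ℝ) := by
      rw [hK]
      exact_mod_cast congrArg (fun z : ℤ => (z : ℝ)) (Int.toNat_of_nonneg hcl0)
    have hpK : (L:ℝ) ≤ (p:ℝ)^K := by
      have h1 : Real.logb p L ≤ (K:ℝ) := by rw [hKr]; exact Int.le_ceil _
      calc (L:ℝ) = (p:ℝ) ^ (Real.logb p L) :=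
            (Real.rpow_logb hq0 (ne_of_gt hq1) (by exact_mod_cast hL)).symm
        _ ≤ (p:ℝ) ^ ((K:ℝ)) := Real.rpow_le_rpow_of_exponent_le (le_of_lt hq1) h1
        _ = (p:ℝ)^K := Real.rpow_natCast _ _
    have e2 : ∑ j ∈ Finset.Icc 1 K, (c j : ℝ)
        ≤ ∑ i ∈ Finset.range L, (padicValInt p (y + (i:ℤ)) : ℝ) := by
      have h1 : ∑ j ∈ Finset.Icc 1 K, c j
          ≤ ∑ i ∈ Finset.range L, padicValInt p (y + (i:ℤ)) := by
        rw [main_id K]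
        exact Finset.sum_le_sum fun i _ => min_le_left _ _
      exact_mod_cast h1
    set G := ∑ j ∈ Finset.Icc 1 K, ((1:ℝ)/p)^j with hG
    have hGeq := aux_geom p hq0 K
    have hsum : ∑ j ∈ Finset.Icc 1 K, ((L:ℝ) * (1/p)^j - 1) = (L:ℝ) * G - K := by
      rw [Finset.sum_sub_distrib, ← Finset.mul_sum, ← hG, Finset.sum_const, Nat.card_Icc,
        nsmul_eq_mul]
      norm_num
    have hlow : ∑ j ∈ Finset.Icc 1 K, ((L:ℝ) * (1/p)^j - 1)
        ≤ ∑ j ∈ Finset.Icc 1 K, (c j : ℝ) :=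
      Finset.sum_le_sum fun j _ => hcl j
    have hLrK : (L:ℝ) * (1/p)^K ≤ 1 := by
      rw [one_div, inv_pow, ← div_eq_mul_inv, div_le_one (hpj K)]
      exact hpK
    have hp2 : (2:ℝ) ≤ (p:ℝ) := by exact_mod_cast hp.two_le
    have h5 : ((p:ℝ)-1) * ((L:ℝ) * G) = (L:ℝ) - (L:ℝ) * ((1:ℝ)/p)^K := by
      rw [mul_left_comm, hGeq]; ring
    have h6 : (L:ℝ)/((p:ℝ)-1) - 1 ≤ (L:ℝ) * G := by
      rw [sub_le_iff_le_add, div_le_iff₀ hp1]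
      nlinarith [h5, hLrK, hp2]
    rw [hsum] at hlow
    linarith [e2, hlow, h6, hKr.symm.le, hKr.le]
  · -- upper bound
    set M : ℤ := max |y| |y + (L:ℤ) - 1| with hM
    have habs : ∀ i : ℕ, i < L → |y + (i:ℤ)| ≤ M := by
      intro i hi
      rw [hM, le_max_iff]
      rcases hy with h | h
      · right; rw [abs_of_pos (by omega), abs_of_pos (by omega)]; omega
      · left; rw [abs_of_neg (by omega), abs_of_neg (by omega)]; omega
    have hM1 : (1:ℤ) ≤ M := le_trans (Int.one_le_abs (hne 0 hL)) (habs 0 hL)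
    have hMr1 : (1:ℝ) ≤ ((M:ℤ):ℝ) := by exact_mod_cast hM1
    have hMr0 : (0:ℝ) < ((M:ℤ):ℝ) := by linarith
    have hlogM : 0 ≤ Real.logb p ((M:ℤ):ℝ) := Real.logb_nonneg hq1 hMr1
    have hfl0 : 0 ≤ ⌊Real.logb p ((M:ℤ):ℝ)⌋ := Int.floor_nonneg.mpr hlogM
    set J := (⌊Real.logb p ((M:ℤ):ℝ)⌋).toNat with hJ
    have hJr : (J:ℝ) = (⌊Real.logb p ((M:ℤ):ℝ)⌋ : ℝ) := by
      rw [hJ]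
      exact_mod_cast congrArg (fun z : ℤ => (z : ℝ)) (Int.toNat_of_nonneg hfl0)
    have hvJ : ∀ i ∈ Finset.range L, padicValInt p (y + (i:ℤ)) ≤ J := by
      intro i hi
      have hiL := Finset.mem_range.mp hi
      have h1 := aux_val_le p hp (y + (i:ℤ)) (hne i hiL)
      have habspos : (0:ℝ) < |(((y + (i:ℤ)) : ℤ) : ℝ)| := by
        rw [abs_pos]
        exact_mod_cast hne i hiL
      have h2 : Real.logb p |(((y + (i:ℤ)) : ℤ) : ℝ)| ≤ Real.logb p ((M:ℤ):ℝ) := by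
        apply (Real.logb_le_logb hq1 habspos hMr0).mpr
        rw [← Int.cast_abs]
        exact_mod_cast habs i hiL
      have h3 : (padicValInt p (y + (i:ℤ)) : ℤ) ≤ ⌊Real.logb p ((M:ℤ):ℝ)⌋ :=
        Int.le_floor.mpr (by push_cast; linarith)
      omega
    have e1 : ∑ i ∈ Finset.range L, (padicValInt p (y + (i:ℤ)) : ℝ)
        = ∑ j ∈ Finset.Icc 1 J, (c j : ℝ) := by
      have h1 := main_id J
      rw [Finset.sum_congr rfl (fun i hi => min_eq_left (hvJ i hi))] at h1
      exact_mod_cast h1.symm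
    have hG : ∑ j ∈ Finset.Icc 1 J, ((1:ℝ)/p)^j ≤ 1/((p:ℝ)-1) := by
      have h := geom_sum_Ico_le_of_lt_one (x := 1/(p:ℝ)) (by positivity)
        (by rw [div_lt_one hq0]; exact hq1) (m := 1) (n := J+1)
      rw [Finset.Ico_add_one_right_eq_Icc] at h
      calc ∑ j ∈ Finset.Icc 1 J, ((1:ℝ)/p)^j ≤ (1/(p:ℝ))^1 / (1 - 1/p) := h
        _ = 1/((p:ℝ)-1) := by rw [pow_one]; field_simp
    have hsum : ∑ j ∈ Finset.Icc 1 J, (((L:ℝ)-1) * (1/p)^j + 1)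
        = ((L:ℝ)-1) * (∑ j ∈ Finset.Icc 1 J, ((1:ℝ)/p)^j) + J := by
      rw [Finset.sum_add_distrib, ← Finset.mul_sum, Finset.sum_const, Nat.card_Icc,
        nsmul_eq_mul]
      norm_num
    have hup : ∑ j ∈ Finset.Icc 1 J, (c j : ℝ)
        ≤ ∑ j ∈ Finset.Icc 1 J, (((L:ℝ)-1) * (1/p)^j + 1) :=
      Finset.sum_le_sum fun j _ => hcu j
    have hL1 : (0:ℝ) ≤ (L:ℝ) - 1 := by
      have : (1:ℝ) ≤ (L:ℝ) := by exact_mod_cast hL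
      linarith
    have hmax : (⌊Real.logb p ((M:ℤ):ℝ)⌋ : ℝ)
        ≤ max ((⌊Real.logb p |(y : ℝ)|⌋ : ℝ)) ((⌊Real.logb p |(y : ℝ) + (L : ℝ) - 1|⌋ : ℝ)) := by
      rcases le_total |y| |y + (L:ℤ) - 1| with h | h
      · have hMe : ((M:ℤ):ℝ) = |(y:ℝ) + (L:ℝ) - 1| := by
          rw [hM, max_eq_right h]; push_cast; ring_nf
        rw [hMe]; exact le_max_right _ _
      · have hMe : ((M:ℤ):ℝ) = |(y:ℝ)| := by
          rw [hM, max_eq_left h]; push_cast; ring_nf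
        rw [hMe]; exact le_max_left _ _
    rw [e1]
    calc ∑ j ∈ Finset.Icc 1 J, (c j : ℝ)
        ≤ ((L:ℝ)-1) * (∑ j ∈ Finset.Icc 1 J, ((1:ℝ)/p)^j) + J := by rw [← hsum]; exact hup
      _ ≤ ((L:ℝ)-1) * (1/((p:ℝ)-1)) + J := by
          have := mul_le_mul_of_nonneg_left hG hL1
          linarith
      _ = ((L:ℝ)-1)/((p:ℝ)-1) + J := by ring
      _ ≤ _ := by rw [hJr]; linarith [hmax]
end

section
/- Let k₁, …, k_M be an arithmetic progression of integers with common difference coprime to p, let e ≥ 0 with p^e dividing M, and set D = M/p^e. Then: (a) the number of indices i with v_p(k_i) ≥ e equals D; (b) for each 0 ≤ v < e, the number of indices i with v_p(k_i) = v equals D·(p-1)·p^{e-v-1}. -/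
lemma count_mod_aux (n q s : ℕ) (hn : 0 < n) (hs : s < n) :
    ((Finset.range (n * q)).filter fun i => i % n = s).card = q := by
  have h : ((Finset.range (n * q)).filter fun i => i % n = s).card
      = (Finset.range q).card := by
    apply Finset.card_nbij' (fun i => i / n) (fun j => n * j + s)
    · intro a ha
      simp only [Finset.mem_coe, Finset.mem_filter, Finset.mem_range] at ha ⊢
      exact Nat.div_lt_of_lt_mul ha.1
    · intro j hj
      simp only [Finset.mem_coe, Finset.mem_filter, Finset.mem_range] at hj ⊢
      refine ⟨?_, by simp [Nat.mul_add_mod, Nat.mod_eq_of_lt hs]⟩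
      calc n * j + s < n * j + n := by omega
        _ = n * (j + 1) := by ring
        _ ≤ n * q := Nat.mul_le_mul_left n hj
    · intro a ha
      simp only [Finset.mem_coe, Finset.mem_filter, Finset.mem_range] at ha
      conv_rhs => rw [← Nat.div_add_mod a n]
      rw [ha.2]
    · intro j _
      dsimp only
      rw [Nat.mul_add_div hn, Nat.div_eq_of_lt hs]
      omega
  rw [h, Finset.card_range]

lemma count_dvd_aux (n M : ℕ) (hn : 0 < n) (hnM : n ∣ M) (a c : ℤ)
    (hc : IsCoprime c (n : ℤ)) :
    ((Finset.range M).filter fun i : ℕ => (n : ℤ) ∣ a + (i : ℤ) * c).card = M / n := by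
  haveI : NeZero n := ⟨hn.ne'⟩
  obtain ⟨u, v, huv⟩ := hc
  have hcu : ((c : ℤ) : ZMod n) * ((u : ℤ) : ZMod n) = 1 := by
    have h1 : ((u * c + v * n : ℤ) : ZMod n) = 1 := by rw [huv]; simp
    push_cast at h1
    rw [ZMod.natCast_self] at h1
    ring_nf at h1 ⊢
    linear_combination h1
  set r : ZMod n := ((-a : ℤ) : ZMod n) * ((u : ℤ) : ZMod n) with hr
  have key : ∀ i : ℕ, ((n : ℤ) ∣ a + (i : ℤ) * c) ↔ i % n = r.val := by
    intro i
    rw [← ZMod.intCast_zmod_eq_zero_iff_dvd]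
    have step1 : ((a + (i : ℤ) * c : ℤ) : ZMod n) = 0 ↔ (i : ZMod n) = r := by
      push_cast
      constructor
      · intro h
        rw [hr]
        push_cast
        linear_combination ((u : ℤ) : ZMod n) * h - (i : ZMod n) * hcu
      · intro h
        rw [h, hr]
        push_cast
        linear_combination (-(a : ZMod n)) * hcu
    rw [step1]
    constructor
    · intro h
      rw [← h, ZMod.val_natCast]
    · intro h
      rw [← ZMod.natCast_mod, h, ZMod.natCast_rightInverse r]
  obtain ⟨q, rfl⟩ := hnM
  rw [Finset.filter_congr (fun i _ => by rw [key i])]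
  rw [count_mod_aux n q r.val hn (ZMod.val_lt r), Nat.mul_div_cancel_left q hn]

/-- Let k i = k₁ + i·c (i = 0,…,M-1) be an arithmetic progression of
integers with common difference c coprime to the prime p, let p^e ∣ M and D = M/p^e.
(a) #{i : v_p(k i) ≥ e} = D (where divisibility by p^e encodes v_p ≥ e, including 0);
(b) for 0 ≤ v < e, #{i : v_p(k i) = v} = D·(p-1)·p^{e-v-1}. -/
theorem stmt4 (p : ℕ) (hp : p.Prime) (M : ℕ) (hM : 0 < M) (k₁ c : ℤ)
    (hc : IsCoprime c (p : ℤ)) (e : ℕ) (he : p ^ e ∣ M) (D : ℕ) (hD : D = M / p ^ e)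
    (k : ℕ → ℤ) (hk : ∀ i, k i = k₁ + i * c) :
    ((Finset.range M).filter fun i => (p : ℤ) ^ e ∣ k i).card = D ∧
    ∀ v : ℕ, v < e →
      ((Finset.range M).filter fun i =>
        (p : ℤ) ^ v ∣ k i ∧ ¬ (p : ℤ) ^ (v + 1) ∣ k i).card
      = D * (p - 1) * p ^ (e - v - 1) := by
  have hp1 : 1 < p := hp.one_lt
  have count : ∀ w : ℕ, p ^ w ∣ M →
      ((Finset.range M).filter fun i => (p : ℤ) ^ w ∣ k i).card = M / p ^ w := by
    intro w hw
    have heq : ((Finset.range M).filter fun i => (p : ℤ) ^ w ∣ k i) =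
        (Finset.range M).filter fun i : ℕ => ((p ^ w : ℕ) : ℤ) ∣ k₁ + (i : ℤ) * c := by
      apply Finset.filter_congr
      intro i _
      rw [hk i]
      push_cast
      rfl
    rw [heq]
    exact count_dvd_aux (p ^ w) M (pow_pos hp.pos w) hw k₁ c
      (by push_cast; exact hc.pow_right)
  constructor
  · rw [count e he, hD]
  · intro v hv
    have hv1 : p ^ (v + 1) ∣ M := dvd_trans (pow_dvd_pow p hv) he
    have hvd : p ^ v ∣ M := dvd_trans (pow_dvd_pow p hv.le) he
    have hsplit : ((Finset.range M).filter fun i =>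
        (p : ℤ) ^ v ∣ k i ∧ ¬ (p : ℤ) ^ (v + 1) ∣ k i) =
        ((Finset.range M).filter fun i => (p : ℤ) ^ v ∣ k i) \
        ((Finset.range M).filter fun i => (p : ℤ) ^ (v + 1) ∣ k i) := by
      ext i
      simp only [Finset.mem_filter, Finset.mem_sdiff, Finset.mem_range]
      tauto
    rw [hsplit, Finset.card_sdiff_of_subset, count v hvd, count (v + 1) hv1]
    · -- arithmetic
      have hMD : M = p ^ e * D := by
        rw [hD, Nat.mul_div_cancel' he]
      have h1 : M / p ^ v = p ^ (e - v) * D := by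
        have hMv : M = p ^ v * (p ^ (e - v) * D) := by
          rw [hMD, ← mul_assoc, ← pow_add]
          congr 2
          omega
        rw [hMv, Nat.mul_div_cancel_left _ (pow_pos hp.pos v)]
      have h2 : M / p ^ (v + 1) = p ^ (e - v - 1) * D := by
        have hMv : M = p ^ (v + 1) * (p ^ (e - v - 1) * D) := by
          rw [hMD, ← mul_assoc, ← pow_add]
          congr 2
          omega
        rw [hMv, Nat.mul_div_cancel_left _ (pow_pos hp.pos (v + 1))]
      rw [h1, h2]
      set A := p ^ (e - v - 1) with hA
      have hev : e - v = (e - v - 1) + 1 := by omega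
      rw [hev, pow_succ, ← hA]
      have hle : A * D ≤ A * p * D :=
        Nat.mul_le_mul_right D (Nat.le_mul_of_pos_right A hp.pos)
      zify [hle, hp1.le]
      ring
    · intro i hi
      simp only [Finset.mem_filter, Finset.mem_range] at hi ⊢
      exact ⟨hi.1, dvd_trans (pow_dvd_pow _ (by omega)) hi.2⟩
end

section
/- Let 𝒫 = {(i, y_i) : i ≥ 0} with y_i ∈ ℝ_{≥0}, and suppose for some positive integer C and real number δ that the consecutive differences Δ_i = y_i − y_{i−1} satisfy Δ_{i+C} = Δ_i + δ for all i ≥ 1 (i.e. the Δ-slopes form a union of C arithmetic progressions with common difference δ). Then if x ≥ C is the index of a breakpoint (vertex) of the lower convex hull (Newton polygon) of 𝒫, so is x − C. -/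
/-- `x` is a breakpoint (vertex) of the Newton polygon (lower convex hull) of the
points `(i, y i)`: the point `(x, y x)` lies strictly below every secant line
through points `(i, y i)`, `(j, y j)` with `i < x < j`. -/
def IsBreakpoint (y : ℕ → ℝ) (x : ℕ) : Prop :=
  ∀ i j : ℕ, i < x → x < j →
    y x * ((j : ℝ) - (i : ℝ)) < y i * ((j : ℝ) - (x : ℝ)) + y j * ((x : ℝ) - (i : ℝ))

lemma shift_aux (y : ℕ → ℝ) (C : ℕ) (δ : ℝ)
    (hΔ : ∀ i : ℕ, 1 ≤ i → y (i + C) - y (i + C - 1) = (y i - y (i - 1)) + δ) :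
    ∀ i : ℕ, y (i + C) = y i + (y C - y 0) + δ * i := by
  intro i
  induction i with
  | zero => simp
  | succ n ih =>
    have h := hΔ (n + 1) (by omega)
    have h1 : n + 1 + C - 1 = n + C := by omega
    have h2 : n + 1 - 1 = n := by omega
    rw [h1, h2] at h
    push_cast
    nlinarith [h, ih]

/-- If the Δ-slopes Δ_i = y_i − y_{i−1} satisfy Δ_{i+C} = Δ_i + δ for
all i ≥ 1 (C arithmetic progressions with common difference δ), then whenever
x ≥ C is a breakpoint of the Newton polygon of {(i, y_i)}, so is x − C. -/
theorem stmt5 (y : ℕ → ℝ) (hy : ∀ i, 0 ≤ y i) (C : ℕ) (hC : 0 < C) (δ : ℝ)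
    (hΔ : ∀ i : ℕ, 1 ≤ i → y (i + C) - y (i + C - 1) = (y i - y (i - 1)) + δ)
    (x : ℕ) (hx : C ≤ x) (hbp : IsBreakpoint y x) :
    IsBreakpoint y (x - C) := by
  intro i j hi hj
  have hsh := shift_aux y C δ hΔ
  have hx' : x = (x - C) + C := by omega
  have key := hbp (i + C) (j + C) (by omega) (by omega)
  have hyx : y x = y (x - C) + (y C - y 0) + δ * (x - C : ℕ) := by
    conv_lhs => rw [hx']
    exact hsh (x - C)
  have hyi := hsh i
  have hyj := hsh j
  rw [hyx, hyi, hyj] at key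
  have hcx : ((x - C : ℕ) : ℝ) = (x : ℝ) - C := by
    push_cast [Nat.cast_sub hx]; ring
  push_cast at key ⊢
  rw [hcx] at *
  nlinarith [key]
end

section
/- Fix a, b > 0 and let ℛ be the region in the plane between the graphs of u(x) = ax² + bx·log x and ℓ(x) = ax² − bx·log x (for x > 1). For every ε > 0 there is a constant C > 0 (depending only on a, b, ε) such that: if M < N are real numbers with M > 1 and there exist y_M, y_N so that the line segment from (M, y_M) to (N, y_N) is entirely contained in ℛ, then N − M ≤ C·M^{1/2+ε}. -/
set_option maxHeartbeats 1000000


/-- Fix a, b > 0 and the region ℛ between u(x)=ax²+bx·log x and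
ℓ(x)=ax²−bx·log x for x > 1.  For every ε > 0 there is C > 0 such that whenever a
line segment from (M, y_M) to (N, y_N) with 1 < M < N lies entirely in ℛ, we have
N − M ≤ C·M^{1/2+ε}. -/
theorem stmt7 (a b : ℝ) (ha : 0 < a) (hb : 0 < b) (ε : ℝ) (hε : 0 < ε) :
    ∃ C : ℝ, 0 < C ∧ ∀ M N yM yN : ℝ, 1 < M → M < N →
      (∀ t : ℝ, t ∈ Set.Icc (0 : ℝ) 1 →
        a * ((1 - t) * M + t * N) ^ 2
            - b * ((1 - t) * M + t * N) * Real.log ((1 - t) * M + t * N)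
          ≤ (1 - t) * yM + t * yN ∧
        (1 - t) * yM + t * yN
          ≤ a * ((1 - t) * M + t * N) ^ 2
            + b * ((1 - t) * M + t * N) * Real.log ((1 - t) * M + t * N)) →
      N - M ≤ C * M ^ ((1 : ℝ) / 2 + ε) := by
  set K : ℝ := 8 * b / a with hK
  have hKpos : 0 < K := by positivity
  set A : ℝ := K * 2 ^ (1 + 2 * ε) / (2 * ε) with hA
  have hApos : 0 < A := by positivity
  clear_value K A
  refine ⟨Real.sqrt A + 64 * K ^ 2 + 1, by positivity, ?_⟩
  intro M N yM yN hM hMN H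
  have hM0 : (0:ℝ) < M := by linarith
  have hN1 : (1:ℝ) < N := by linarith
  have hN0 : (0:ℝ) < N := by linarith
  have hMexp : (1:ℝ) ≤ M ^ ((1:ℝ)/2 + ε) := by
    apply Real.one_le_rpow hM.le; linarith
  have hMexp0 : (0:ℝ) ≤ M ^ ((1:ℝ)/2 + ε) := by positivity
  -- key inequality
  have h0 := (H 0 (by norm_num)).1
  have h1 := (H 1 (by norm_num)).1
  have hh := (H (1/2) (by norm_num)).2
  simp only [sub_zero, one_mul, zero_mul, add_zero, zero_add, sub_self] at h0 h1
  have hx : (1-(1/2:ℝ))*M + (1/2)*N = (M+N)/2 := by ring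
  rw [hx] at hh
  have hxm1 : (1:ℝ) < (M+N)/2 := by linarith
  have hxmN : (M+N)/2 ≤ N := by linarith
  have hlogM : 0 ≤ Real.log M := Real.log_nonneg hM.le
  have hlogxm : 0 ≤ Real.log ((M+N)/2) := Real.log_nonneg hxm1.le
  have hlogN : 0 ≤ Real.log N := Real.log_nonneg hN1.le
  have hlogMN : Real.log M ≤ Real.log N := Real.log_le_log hM0 hMN.le
  have hlogxmN : Real.log ((M+N)/2) ≤ Real.log N := Real.log_le_log (by linarith) hxmN
  have hmul1 : b * (M * Real.log M) ≤ b * (N * Real.log N) :=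
    mul_le_mul_of_nonneg_left (mul_le_mul hMN.le hlogMN hlogM hN0.le) hb.le
  have hmul2 : b * ((M+N)/2 * Real.log ((M+N)/2)) ≤ b * (N * Real.log N) :=
    mul_le_mul_of_nonneg_left (mul_le_mul hxmN hlogxmN hlogxm hN0.le) hb.le
  have key : (N - M) ^ 2 ≤ K * (N * Real.log N) := by
    rw [hK, div_mul_eq_mul_div, le_div_iff₀ ha]
    nlinarith [h0, h1, hh, hmul1, hmul2]
  rcases le_or_gt N (2 * M) with hcase | hcase
  · -- N ≤ 2M
    have hlog2M : Real.log (2 * M) ≤ (2 * M) ^ (2 * ε) / (2 * ε) :=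
      Real.log_le_rpow_div (by positivity) (by positivity)
    have h2 : N * Real.log N ≤ (2 * M) * Real.log (2 * M) :=
      mul_le_mul hcase (Real.log_le_log hN0 hcase) hlogN (by positivity)
    have h3 : (2 * M) * Real.log (2 * M) ≤ (2 * M) ^ (1 + 2 * ε) / (2 * ε) := by
      calc (2 * M) * Real.log (2 * M) ≤ (2 * M) * ((2 * M) ^ (2 * ε) / (2 * ε)) := by
            apply mul_le_mul_of_nonneg_left hlog2M (by positivity)
        _ = (2 * M) ^ (1 + 2 * ε) / (2 * ε) := by
            rw [Real.rpow_add (by positivity), Real.rpow_one]; ring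
    have h4 : (2 * M) ^ (1 + 2 * ε) = 2 ^ (1 + 2 * ε) * M ^ (1 + 2 * ε) :=
      Real.mul_rpow (by norm_num) hM0.le
    have h5 : (N - M) ^ 2 ≤ A * M ^ (1 + 2 * ε) := by
      calc (N - M)^2 ≤ K * (N * Real.log N) := key
        _ ≤ K * ((2 * M) ^ (1 + 2 * ε) / (2 * ε)) :=
            mul_le_mul_of_nonneg_left (h2.trans h3) hKpos.le
        _ = A * M ^ (1 + 2 * ε) := by rw [h4, hA]; ring
    have hpow : M ^ ((1:ℝ)/2 + ε) * M ^ ((1:ℝ)/2 + ε) = M ^ (1 + 2 * ε) := by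
      rw [← Real.rpow_add hM0]; congr 1; ring
    have hnn : 0 ≤ Real.sqrt A * M ^ ((1:ℝ)/2 + ε) :=
      mul_nonneg (Real.sqrt_nonneg A) hMexp0
    have e : (Real.sqrt A * M ^ ((1:ℝ)/2 + ε)) ^ 2 = A * M ^ (1 + 2 * ε) := by
      rw [mul_pow, Real.sq_sqrt hApos.le, sq, hpow]
    have h6 : (N - M) ^ 2 ≤ (Real.sqrt A * M ^ ((1:ℝ)/2 + ε)) ^ 2 := by
      rw [e]; exact h5
    have h7 : N - M ≤ Real.sqrt A * M ^ ((1:ℝ)/2 + ε) := by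
      calc N - M ≤ |N - M| := le_abs_self _
        _ = Real.sqrt ((N - M) ^ 2) := (Real.sqrt_sq_eq_abs _).symm
        _ ≤ Real.sqrt ((Real.sqrt A * M ^ ((1:ℝ)/2 + ε)) ^ 2) := Real.sqrt_le_sqrt h6
        _ = Real.sqrt A * M ^ ((1:ℝ)/2 + ε) := Real.sqrt_sq hnn
    have h8 : (0:ℝ) ≤ (64 * K ^ 2 + 1) * M ^ ((1:ℝ)/2 + ε) := by positivity
    linarith [h7, h8]
  · -- N > 2M
    have hhalfN : N / 2 ≤ N - M := by linarith
    have hlogle : Real.log N ≤ 2 * Real.sqrt N := by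
      have := Real.log_le_rpow_div hN0.le (by norm_num : (0:ℝ) < 1/2)
      rw [← Real.sqrt_eq_rpow] at this
      linarith
    have hsqrtN : 0 < Real.sqrt N := Real.sqrt_pos.mpr hN0
    have hNsq : Real.sqrt N * Real.sqrt N = N := Real.mul_self_sqrt hN0.le
    have hN4 : (N/2)^2 ≤ K * (N * Real.log N) :=
      le_trans (by nlinarith [hhalfN, hN0]) key
    have hNbound : N ≤ 4 * K * Real.log N := by nlinarith [hN4, hN0]
    have hNb2 : N ≤ 8 * K * Real.sqrt N := by
      nlinarith [mul_le_mul_of_nonneg_left hlogle hKpos.le]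
    have hsle : Real.sqrt N ≤ 8 * K := by nlinarith [hNsq, hsqrtN, hNb2]
    have hNle : N ≤ 64 * K ^ 2 := by nlinarith [hNsq, hsle, hsqrtN.le]
    have h8 : N - M ≤ 64 * K ^ 2 * M ^ ((1:ℝ)/2 + ε) := by
      calc N - M ≤ N := by linarith
        _ ≤ 64 * K ^ 2 := hNle
        _ ≤ 64 * K ^ 2 * M ^ ((1:ℝ)/2+ε) := le_mul_of_one_le_right (by positivity) hMexp
    have h9 : (0:ℝ) ≤ (Real.sqrt A + 1) * M ^ ((1:ℝ)/2 + ε) :=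
      mul_nonneg (by positivity) hMexp0
    linarith [h8, h9]
end

section
/- With a, b > 0, u(x) = ax² + bx·log x, and ℓ(x) = ax² − bx·log x, fix ε ∈ (0, 1/2). Then for all sufficiently large M, u'(M + M^{1/2+ε}) > (u(M + M^{1/2+ε}) − ℓ(M)) / M^{1/2+ε}. -/
/-- With a, b > 0, u(x) = ax² + bx·log x, ℓ(x) = ax² − bx·log x, and
ε ∈ (0, 1/2), for all sufficiently large M we have
u'(M + M^{1/2+ε}) > (u(M + M^{1/2+ε}) − ℓ(M)) / M^{1/2+ε},
where u'(x) = 2ax + b·log x + b. -/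
theorem stmt8 (a b : ℝ) (ha : 0 < a) (hb : 0 < b) (ε : ℝ) (hε1 : 0 < ε)
    (hε2 : ε < 1 / 2) :
    ∃ M₀ : ℝ, ∀ M : ℝ, M₀ ≤ M →
      ((a * (M + M ^ ((1 : ℝ) / 2 + ε)) ^ 2
          + b * (M + M ^ ((1 : ℝ) / 2 + ε)) * Real.log (M + M ^ ((1 : ℝ) / 2 + ε)))
        - (a * M ^ 2 - b * M * Real.log M)) / M ^ ((1 : ℝ) / 2 + ε)
      < 2 * a * (M + M ^ ((1 : ℝ) / 2 + ε))
          + b * Real.log (M + M ^ ((1 : ℝ) / 2 + ε)) + b := by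
  have h2ε : (0:ℝ) < 2 * ε := by linarith
  have hlo := isLittleO_log_rpow_atTop h2ε
  have hc : (0:ℝ) < a / (6 * b) := by positivity
  have hev := hlo.def hc
  rw [Filter.eventually_atTop] at hev
  obtain ⟨M₁, hM₁⟩ := hev
  refine ⟨max 2 M₁, fun M hM => ?_⟩
  have hM2 : 2 ≤ M := le_trans (le_max_left _ _) hM
  have hM1' : M₁ ≤ M := le_trans (le_max_right _ _) hM
  have hMpos : 0 < M := by linarith
  have hM1 : 1 ≤ M := by linarith
  set h := M ^ ((1:ℝ)/2 + ε) with hh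
  have hhpos : 0 < h := Real.rpow_pos_of_pos hMpos _
  have hhle : h ≤ M := by
    calc h ≤ M ^ (1:ℝ) := Real.rpow_le_rpow_of_exponent_le hM1 (by linarith)
    _ = M := Real.rpow_one M
  have hNpos : 0 < M + h := by linarith
  have hlogN : Real.log (M + h) ≤ Real.log 2 + Real.log M := by
    rw [← Real.log_mul (by norm_num) (ne_of_gt hMpos)]
    exact Real.log_le_log hNpos (by linarith)
  have hlog2 : Real.log 2 ≤ Real.log M := Real.log_le_log (by norm_num) hM2
  have hlogbound := hM₁ M hM1'
  have hlogM0 : 0 ≤ Real.log M := Real.log_nonneg hM1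
  have hrpos : 0 < M ^ (2*ε) := Real.rpow_pos_of_pos hMpos _
  rw [Real.norm_eq_abs, Real.norm_eq_abs, abs_of_nonneg hlogM0,
    abs_of_nonneg hrpos.le] at hlogbound
  have hsq : h ^ 2 = M * M ^ (2*ε) := by
    rw [hh, ← Real.rpow_natCast (M ^ _) 2, ← Real.rpow_mul hMpos.le]
    rw [show ((1:ℝ)/2 + ε) * ((2:ℕ):ℝ) = 1 + 2*ε by push_cast; ring]
    rw [Real.rpow_add hMpos, Real.rpow_one]
  have hkey : b*M*Real.log (M+h) + b*M*Real.log M < a * h ^ 2 := by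
    have h3 : Real.log (M+h) + Real.log M ≤ 3 * Real.log M := by linarith
    calc b*M*Real.log (M+h) + b*M*Real.log M
        = b*M*(Real.log (M+h) + Real.log M) := by ring
      _ ≤ b*M*(3*Real.log M) := mul_le_mul_of_nonneg_left h3 (by positivity)
      _ ≤ b*M*(3*(a/(6*b) * M ^ (2*ε))) :=
          mul_le_mul_of_nonneg_left (by linarith) (by positivity)
      _ = (a/2) * (M * M ^ (2*ε)) := by field_simp; ring
      _ < a * (M * M ^ (2*ε)) :=
          mul_lt_mul_of_pos_right (by linarith) (by positivity)
      _ = a * h ^ 2 := by rw [hsq]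
  rw [div_lt_iff₀ hhpos]
  nlinarith [hkey, mul_pos hb hhpos]
end

section
/- Let p be an odd prime, and let k_n = k₀ + n(p−1) for n ∈ ℤ. With w_k = (1+p)^k − 1, fix integers b and λ > 0 and set P_{b,λ}(w) = ∏_{j=b−λ+1}^{b} (w − w_{k_j}). Then for any integer n with n ∉ {b−λ+1, …, b}, v_p(P_{b,λ}(w_{k_n})) = λ + Σ_{j=b−λ+1}^{b} v_p(n − j), and this quantity satisfies v_p(P_{b,λ}(w_{k_n})) ≥ λ + λ/(p−1) − ⌈log_p λ⌉ − 1. -/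
open Finset

variable {p : ℕ} [hp : Fact p.Prime]

lemma my_val_prod {ι : Type*} (s : Finset ι) (f : ι → ℚ_[p]) (h : ∀ i ∈ s, f i ≠ 0) :
    (∏ i ∈ s, f i).valuation = ∑ i ∈ s, (f i).valuation := by
  classical
  induction s using Finset.cons_induction with
  | empty => simp
  | cons a s ha ih =>
    rw [Finset.prod_cons, Finset.sum_cons,
      Padic.valuation_mul (h a (Finset.mem_cons_self a s))
        (Finset.prod_ne_zero_iff.mpr fun i hi => h i (Finset.mem_cons_of_mem hi)),
      ih fun i hi => h i (Finset.mem_cons_of_mem hi)]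

lemma my_val_neg (x : ℚ_[p]) : (-x).valuation = x.valuation := by
  rcases eq_or_ne x 0 with rfl | hx
  · simp
  · have h1 : ((-1 : ℤ) : ℚ_[p]) = -1 := by push_cast; ring
    have := Padic.valuation_mul (x := ((-1 : ℤ) : ℚ_[p])) (y := x) (by simp [h1]) hx
    rw [h1] at this
    rw [neg_one_mul] at this
    rw [this, ← h1, Padic.valuation_intCast]
    simp [padicValInt]

lemma my_val_inv (x : ℚ_[p]) (hx : x ≠ 0) : (x⁻¹).valuation = -x.valuation := by
  have := Padic.valuation_mul hx (inv_ne_zero hx)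
  rw [mul_inv_cancel₀ hx, Padic.valuation_one] at this
  linarith

lemma my_val_pow_zero (x : ℚ_[p]) (hx : x ≠ 0) (h0 : x.valuation = 0) (N : ℕ) :
    (x ^ N).valuation = 0 := by
  induction N with
  | zero => simp
  | succ k ih =>
    rw [pow_succ, Padic.valuation_mul (pow_ne_zero _ hx) hx, ih, h0, add_zero]

lemma my_val_zpow_zero (x : ℚ_[p]) (hx : x ≠ 0) (h0 : x.valuation = 0) (m : ℤ) :
    (x ^ m).valuation = 0 := by
  obtain ⟨N, rfl | rfl⟩ := m.eq_nat_or_neg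
  · rw [zpow_natCast]; exact my_val_pow_zero x hx h0 N
  · rw [zpow_neg, zpow_natCast, my_val_inv _ (pow_ne_zero _ hx),
      my_val_pow_zero x hx h0 N, neg_zero]

lemma my_u_cast : (1 + (p : ℚ_[p])) = ((1 + p : ℕ) : ℚ_[p]) := by push_cast; ring

lemma my_u_ne_zero : (1 + (p : ℚ_[p])) ≠ 0 := by
  rw [my_u_cast]
  exact_mod_cast Nat.cast_ne_zero.mpr (by omega : (1:ℕ) + p ≠ 0)

lemma my_u_val_zero : (1 + (p : ℚ_[p])).valuation = 0 := by
  rw [my_u_cast, Padic.valuation_natCast]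
  have : ¬ p ∣ (1 + p) := by
    intro h
    have := (Nat.dvd_add_right (dvd_refl p)).mp (by rwa [Nat.add_comm] at h)
    exact Nat.Prime.one_lt hp.out |>.ne' (Nat.le_antisymm (Nat.le_of_dvd one_pos this) (Nat.one_le_of_lt hp.out.one_lt)) |>.elim
  simp [padicValNat.eq_zero_of_not_dvd this]

lemma my_pow_eq (N : ℕ) : (1 + (p : ℚ_[p])) ^ N - 1 = (((1 + p) ^ N - 1 : ℕ) : ℚ_[p]) := by
  have h1 : 1 ≤ (1 + p) ^ N := Nat.one_le_pow _ _ (by omega)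
  push_cast [Nat.cast_sub h1]
  ring

lemma my_pow_ne (N : ℕ) (hN : N ≠ 0) : (1 + (p : ℚ_[p])) ^ N - 1 ≠ 0 := by
  rw [my_pow_eq]
  have : (1 + p) ^ N - 1 ≠ 0 := by
    have : 1 < (1 + p) ^ N := Nat.one_lt_pow hN (by have := hp.out.two_le; omega)
    omega
  exact_mod_cast Nat.cast_ne_zero.mpr this

lemma my_val_pow_sub_one (hodd : Odd p) (N : ℕ) (hN : N ≠ 0) :
    ((1 + (p : ℚ_[p])) ^ N - 1).valuation = 1 + padicValNat p N := by
  rw [my_pow_eq, Padic.valuation_natCast]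
  have key : padicValNat p ((1 + p) ^ N - 1 ^ N) = padicValNat p ((1 + p) - 1) + padicValNat p N :=
    padicValNat.pow_sub_pow (x := 1 + p) (y := 1) hodd (by have := hp.out.two_le; omega) (by simpa using Nat.dvd_refl p)
      (fun h => (Nat.Prime.one_lt hp.out).ne' (Nat.le_antisymm (Nat.le_of_dvd one_pos ((Nat.dvd_add_right (dvd_refl p)).mp (by rwa [Nat.add_comm] at h))) (Nat.one_le_of_lt hp.out.one_lt))) hN
  simp only [one_pow] at key
  rw [key]
  have : (1 + p) - 1 = p := by omega
  rw [this, padicValNat.self hp.out.one_lt]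
  push_cast
  ring

lemma my_val_zpow_sub_one (hodd : Odd p) (m : ℤ) (hm : m ≠ 0) :
    ((1 + (p : ℚ_[p])) ^ m - 1).valuation = 1 + padicValNat p m.natAbs ∧
    (1 + (p : ℚ_[p])) ^ m - 1 ≠ 0 := by
  set u : ℚ_[p] := 1 + (p : ℚ_[p]) with hu
  obtain ⟨N, rfl | rfl⟩ := m.eq_nat_or_neg
  · have hN : N ≠ 0 := by exact_mod_cast hm
    rw [zpow_natCast]
    exact ⟨by rw [my_val_pow_sub_one hodd N hN]; simp, my_pow_ne N hN⟩
  · have hN : N ≠ 0 := by simpa using hm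
    have hweird : u ^ (-(N:ℤ)) - 1 = (-(u ^ (-(N:ℤ)))) * (u ^ N - 1) := by
      have h2 : u ^ (-(N:ℤ)) * u ^ N = 1 := by
        rw [← zpow_natCast u N, ← zpow_add₀ my_u_ne_zero]
        simp
      ring_nf
      ring_nf at h2
      rw [h2]
      ring
    have hz : u ^ (-(N:ℤ)) ≠ 0 := zpow_ne_zero _ my_u_ne_zero
    have hne : u ^ (-(N:ℤ)) - 1 ≠ 0 := by
      rw [hweird]
      exact mul_ne_zero (neg_ne_zero.mpr hz) (my_pow_ne N hN)
    refine ⟨?_, hne⟩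
    rw [hweird, Padic.valuation_mul (neg_ne_zero.mpr hz) (my_pow_ne N hN),
      my_val_neg, my_val_zpow_zero _ my_u_ne_zero my_u_val_zero,
      my_val_pow_sub_one hodd N hN]
    simp

lemma my_factor (hodd : Odd p) (k₀ n j : ℤ) (hnj : n ≠ j) :
    ((1 + (p : ℚ_[p])) ^ (k₀ + n * ((p:ℤ) - 1)) - (1 + (p : ℚ_[p])) ^ (k₀ + j * ((p:ℤ) - 1))).valuation
      = 1 + (padicValInt p (n - j) : ℤ) ∧
    (1 + (p : ℚ_[p])) ^ (k₀ + n * ((p:ℤ) - 1)) - (1 + (p : ℚ_[p])) ^ (k₀ + j * ((p:ℤ) - 1)) ≠ 0 := by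
  set u : ℚ_[p] := 1 + (p : ℚ_[p]) with hu
  have hp2 := hp.out.two_le
  have hm : (n - j) * ((p:ℤ) - 1) ≠ 0 :=
    mul_ne_zero (sub_ne_zero.mpr hnj) (by omega)
  have hsplit : u ^ (k₀ + n * ((p:ℤ) - 1)) - u ^ (k₀ + j * ((p:ℤ) - 1))
      = u ^ (k₀ + j * ((p:ℤ) - 1)) * (u ^ ((n - j) * ((p:ℤ) - 1)) - 1) := by
    have hexp : (k₀ + j * ((p:ℤ) - 1)) + (n - j) * ((p:ℤ) - 1) = k₀ + n * ((p:ℤ) - 1) := by ring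
    rw [← hexp, zpow_add₀ my_u_ne_zero]
    ring
  obtain ⟨hval, hne⟩ := my_val_zpow_sub_one (p := p) hodd ((n - j) * ((p:ℤ) - 1)) hm
  have huz : u ^ (k₀ + j * ((p:ℤ) - 1)) ≠ 0 := zpow_ne_zero _ my_u_ne_zero
  have habs : ((n - j) * ((p:ℤ) - 1)).natAbs = (n - j).natAbs * (p - 1) := by
    rw [Int.natAbs_mul]
    congr 1
    omega
  have hpv : padicValNat p (((n - j) * ((p:ℤ) - 1)).natAbs) = padicValNat p (n - j).natAbs := by
    have h1 : (n - j).natAbs ≠ 0 := by have := sub_ne_zero.mpr hnj; omega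
    have h2 : ¬ p ∣ p - 1 := fun hdvd => absurd (Nat.le_of_dvd (by omega) hdvd) (by omega)
    rw [habs, padicValNat.mul h1 (by omega), padicValNat.eq_zero_of_not_dvd h2, add_zero]
  constructor
  · rw [hsplit, Padic.valuation_mul huz (hne),
      my_val_zpow_zero _ my_u_ne_zero my_u_val_zero, hval, hpv, zero_add]
    rfl
  · rw [hsplit]
    exact mul_ne_zero huz hne

lemma my_prod_consec (a L : ℕ) : ∏ i ∈ Finset.range L, (a + i) = a.ascFactorial L := by
  induction L with
  | zero => simp
  | succ k ih => rw [Finset.prod_range_succ, ih, Nat.ascFactorial_succ, mul_comm]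

lemma my_sum_val_eq (a L : ℕ) (ha : 0 < a) :
    ∑ i ∈ Finset.range L, padicValNat p (a + i) = padicValNat p (∏ i ∈ Finset.range L, (a + i)) := by
  induction L with
  | zero => simp
  | succ k ih =>
    rw [Finset.sum_range_succ, Finset.prod_range_succ, ih,
      padicValNat.mul (Finset.prod_ne_zero_iff.mpr fun i _ => by omega) (by omega)]

lemma my_fact_le_sum (a L : ℕ) (ha : 0 < a) :
    padicValNat p (Nat.factorial L) ≤ ∑ i ∈ Finset.range L, padicValNat p (a + i) := by
  rw [my_sum_val_eq a L ha, my_prod_consec]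
  have hdvd : Nat.factorial L ∣ a.ascFactorial L := Nat.factorial_dvd_ascFactorial a L
  have hne : a.ascFactorial L ≠ 0 := by
    rw [← my_prod_consec]
    exact Finset.prod_ne_zero_iff.mpr fun i _ => by omega
  have h1 : (p : ℕ) ^ padicValNat p (Nat.factorial L) ∣ a.ascFactorial L :=
    dvd_trans pow_padicValNat_dvd hdvd
  exact (padicValNat_dvd_iff_le hne).mp h1

lemma my_legendre (L : ℕ) (hL : 0 < L) :
    (L : ℝ) / ((p : ℝ) - 1) - (Nat.log p L : ℝ) - 1 ≤ (padicValNat p (Nat.factorial L) : ℝ) := by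
  have hp2 := hp.out.two_le
  have hleg : (p - 1) * padicValNat p (Nat.factorial L) = L - (p.digits L).sum :=
    sub_one_mul_padicValNat_factorial L
  have hdig : (p.digits L).sum ≤ (p - 1) * (Nat.log p L + 1) := by
    calc (p.digits L).sum ≤ (p.digits L).length • (p - 1) :=
          List.sum_le_card_nsmul _ _ (fun x hx => by
            have := Nat.digits_lt_base (by omega) hx
            omega)
      _ = (Nat.log p L + 1) * (p - 1) := by
          rw [Nat.digits_len p L (by omega) (by omega), smul_eq_mul]
      _ = (p - 1) * (Nat.log p L + 1) := by ring
  have hsum_le : (p.digits L).sum ≤ L := Nat.digit_sum_le p L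
  have key : L ≤ (p - 1) * padicValNat p (Nat.factorial L) + (p - 1) * (Nat.log p L + 1) := by omega
  have hkey : (L : ℝ) ≤ ((p : ℝ) - 1) * ((padicValNat p (Nat.factorial L) : ℝ) + (Nat.log p L : ℝ) + 1) := by
    have := (Nat.cast_le (α := ℝ)).mpr key
    push_cast [Nat.cast_sub (by omega : 1 ≤ p)] at this
    nlinarith [this]
  have hppos : (0 : ℝ) < (p : ℝ) - 1 := by
    have : (2 : ℝ) ≤ (p : ℝ) := by exact_mod_cast hp2
    linarith
  rw [div_sub' (ne_of_gt hppos), div_sub' (ne_of_gt hppos), div_le_iff₀ hppos]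
  nlinarith [hkey]

lemma my_log_le_ceil (L : ℕ) (hL : 0 < L) :
    (Nat.log p L : ℝ) ≤ (⌈Real.logb p L⌉ : ℝ) := by
  have hp2 := hp.out.two_le
  have hp1 : (1 : ℝ) < (p : ℝ) := by exact_mod_cast hp.out.one_lt
  have h1 : (Nat.log p L : ℝ) ≤ Real.logb p L := by
    have hpow : (p : ℕ) ^ Nat.log p L ≤ L := Nat.pow_log_le_self p (by omega)
    have hx : (0 : ℝ) < (p : ℝ) ^ Nat.log p L := by positivity
    have : Real.logb p ((p : ℝ) ^ Nat.log p L) ≤ Real.logb p L :=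
      Real.logb_le_logb_of_le hp1 hx (by exact_mod_cast hpow)
    rwa [Real.logb_pow, Real.logb_self_eq_one hp1, mul_one] at this
  exact h1.trans (Int.le_ceil _)



/-- Let p be odd prime, k_n = k₀ + n(p−1), w_k = (1+p)^k − 1 ∈ ℚ_p,
and P_{b,L}(w) = ∏_{j=b−L+1}^{b} (w − w_{k_j}).  For any integer n outside
{b−L+1,…,b}: v_p(P_{b,L}(w_{k_n})) = L + Σ_{j=b−L+1}^{b} v_p(n−j), and this is at
least L + L/(p−1) − ⌈log_p L⌉ − 1. -/
theorem stmt18 (p : ℕ) [hp : Fact p.Prime] (hodd : Odd p) (k₀ b : ℤ) (L : ℕ)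
    (hL : 0 < L) (w : ℤ → ℚ_[p])
    (hw : ∀ m : ℤ, w m = (1 + (p : ℚ_[p])) ^ m - 1)
    (n : ℤ) (hn : n ∉ Finset.Icc (b - (L : ℤ) + 1) b) :
    (∏ j ∈ Finset.Icc (b - (L : ℤ) + 1) b,
        (w (k₀ + n * ((p : ℤ) - 1)) - w (k₀ + j * ((p : ℤ) - 1)))).valuation
      = (L : ℤ) + ∑ j ∈ Finset.Icc (b - (L : ℤ) + 1) b, (padicValInt p (n - j) : ℤ) ∧
    (L : ℝ) + (L : ℝ) / ((p : ℝ) - 1) - (⌈Real.logb p L⌉ : ℝ) - 1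
      ≤ ((∏ j ∈ Finset.Icc (b - (L : ℤ) + 1) b,
          (w (k₀ + n * ((p : ℤ) - 1)) - w (k₀ + j * ((p : ℤ) - 1)))).valuation : ℝ) := by
  classical
  have hp2 := hp.out.two_le
  set I := Finset.Icc (b - (L : ℤ) + 1) b with hI
  have hmem : ∀ j ∈ I, n ≠ j := fun j hj h => hn (h ▸ hj)
  have hwf : ∀ j ∈ I, (w (k₀ + n * ((p:ℤ) - 1)) - w (k₀ + j * ((p:ℤ) - 1)))
      = (1 + (p : ℚ_[p])) ^ (k₀ + n * ((p:ℤ) - 1)) - (1 + (p : ℚ_[p])) ^ (k₀ + j * ((p:ℤ) - 1)) := by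
    intro j hj; rw [hw, hw]; ring
  have hprod : (∏ j ∈ I, (w (k₀ + n * ((p:ℤ) - 1)) - w (k₀ + j * ((p:ℤ) - 1))))
      = ∏ j ∈ I, ((1 + (p : ℚ_[p])) ^ (k₀ + n * ((p:ℤ) - 1)) - (1 + (p : ℚ_[p])) ^ (k₀ + j * ((p:ℤ) - 1))) :=
    Finset.prod_congr rfl hwf
  have hfac := fun j (hj : j ∈ I) => my_factor (p := p) hodd k₀ n j (hmem j hj)
  have hcard : I.card = L := by
    rw [hI, Int.card_Icc]
    omega
  have heq : (∏ j ∈ I, (w (k₀ + n * ((p:ℤ) - 1)) - w (k₀ + j * ((p:ℤ) - 1)))).valuation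
      = (L : ℤ) + ∑ j ∈ I, (padicValInt p (n - j) : ℤ) := by
    rw [hprod, my_val_prod _ _ (fun j hj => (hfac j hj).2),
      Finset.sum_congr rfl (fun j hj => (hfac j hj).1), Finset.sum_add_distrib,
      Finset.sum_const, hcard]
    simp
  refine ⟨heq, ?_⟩
  rw [heq]
  -- reduce to the natural-number inequality
  have hnat : padicValNat p (Nat.factorial L) ≤ ∑ j ∈ I, padicValInt p (n - j) := by
    have himg : I = Finset.image (fun i : ℕ => b - (i : ℤ)) (Finset.range L) := by
      ext x
      simp only [hI, Finset.mem_Icc, Finset.mem_image, Finset.mem_range]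
      constructor
      · intro h; exact ⟨(b - x).toNat, by omega, by omega⟩
      · rintro ⟨i, hi, rfl⟩; omega
    have hinj : ∀ i ∈ Finset.range L, ∀ j ∈ Finset.range L,
        b - (i:ℤ) = b - (j:ℤ) → i = j := fun i _ j _ h => by omega
    rw [himg, Finset.sum_image hinj]
    rw [hI, Finset.mem_Icc] at hn
    rcases (by omega : b + 1 ≤ n ∨ n ≤ b - L) with hcase | hcase
    · set a := (n - b).toNat with ha
      have haeq : ∀ i ∈ Finset.range L, padicValInt p (n - (b - (i:ℤ))) = padicValNat p (a + i) := by
        intro i hi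
        show padicValNat p (n - (b - (i:ℤ))).natAbs = _
        congr 1
        omega
      rw [Finset.sum_congr rfl haeq]
      exact my_fact_le_sum a L (by omega)
    · set a := (b - (L:ℤ) + 1 - n).toNat with ha
      have haeq : ∀ i ∈ Finset.range L, padicValInt p (n - (b - (i:ℤ)))
          = padicValNat p (a + (L - 1 - i)) := by
        intro i hi
        rw [Finset.mem_range] at hi
        show padicValNat p (n - (b - (i:ℤ))).natAbs = _
        congr 1
        omega
      rw [Finset.sum_congr rfl haeq,
        Finset.sum_range_reflect (fun i => padicValNat p (a + i)) L]
      exact my_fact_le_sum a L (by omega)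
  -- real estimates
  have h1 := my_legendre (p := p) L hL
  have h2 := my_log_le_ceil (p := p) L hL
  have h3 : (padicValNat p (Nat.factorial L) : ℝ) ≤ ∑ j ∈ I, (padicValInt p (n - j) : ℝ) := by
    calc (padicValNat p (Nat.factorial L) : ℝ)
        ≤ ((∑ j ∈ I, padicValInt p (n - j) : ℕ) : ℝ) := by exact_mod_cast hnat
      _ = ∑ j ∈ I, (padicValInt p (n - j) : ℝ) := by push_cast; rfl
  push_cast
  have : (L : ℝ) / ((p : ℝ) - 1) - (⌈Real.logb p L⌉ : ℝ) - 1
      ≤ ∑ j ∈ I, (padicValInt p (n - j) : ℝ) := by linarith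
  linarith
end

section
/- Let d, d^new : ℤ → ℤ satisfy: d is quasi-linear with period P_d and defect Q_d, d_p := 2d + d^new is quasi-linear with period P_{d_p} and defect Q_{d_p}, and d + d^new is quasi-linear with period P_{d+d^new} and defect Q_{d+d^new}; assume d, d+d^new, d_p are non-decreasing and satisfy the growth condition (d(n) → ∞ as n → ∞, d(n)+d^new(n) → −∞ as n → −∞). Define λ_i = (HZ⁺(i) − LZ⁺(i) + 1) − (HZ⁻(i) − LZ⁻(i) + 1), where HZ⁺(i) = sup{n : d(n) < i}, LZ⁺(i) = inf{n : 2i ≤ 2d(n) + d^new(n)}, HZ⁻(i) = sup{n : 2d(n) + d^new(n) + 2 ≤ 2i}, LZ⁻(i) = inf{n : i < d(n) + d^new(n)}. Then for Q = lcm(Q_d, Q_{d_p}, Q_{d+d^new}), λ_{i+Q} = λ_i + Q·(P_d/Q_d − 4P_{d_p}/Q_{d_p} + P_{d+d^new}/Q_{d+d^new}) for all i ≥ 0. -/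
private lemma qlin_mul (f : ℤ → ℤ) (P Qv : ℤ) (h : ∀ n, f (n + P) = f n + Qv) :
    ∀ k : ℤ, 0 ≤ k → ∀ n, f (n + k * P) = f n + k * Qv := by
  have hnat : ∀ m : ℕ, ∀ n, f (n + (m : ℤ) * P) = f n + (m : ℤ) * Qv := by
    intro m
    induction m with
    | zero => simp
    | succ m ih =>
      intro n
      have h1 := h (n + (m : ℤ) * P)
      have h2 := ih n
      have e : n + ((m : ℤ) + 1) * P = n + (m : ℤ) * P + P := by ring
      push_cast
      rw [e, h1, h2]; ring
  intro k hk n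
  have := hnat k.toNat n
  rwa [Int.toNat_of_nonneg hk] at this

private lemma sSup_shift {S T : Set ℤ} (c : ℤ) (h : ∀ n, n ∈ T ↔ n - c ∈ S)
    (hne : S.Nonempty) (hbdd : BddAbove S) : sSup T = sSup S + c := by
  have hmem : sSup S ∈ S := Int.csSup_mem hne hbdd
  have hTmem : sSup S + c ∈ T := by rw [h]; simpa
  obtain ⟨b, hb⟩ := hbdd
  have hTbdd : BddAbove T := ⟨b + c, fun n hn => by
    have := hb ((h n).1 hn); omega⟩
  refine le_antisymm (csSup_le ⟨_, hTmem⟩ fun n hn => ?_) (le_csSup hTbdd hTmem)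
  have := le_csSup ⟨b, hb⟩ ((h n).1 hn)
  omega

private lemma sInf_shift {S T : Set ℤ} (c : ℤ) (h : ∀ n, n ∈ T ↔ n - c ∈ S)
    (hne : S.Nonempty) (hbdd : BddBelow S) : sInf T = sInf S + c := by
  have hmem : sInf S ∈ S := Int.csInf_mem hne hbdd
  have hTmem : sInf S + c ∈ T := by rw [h]; simpa
  obtain ⟨b, hb⟩ := hbdd
  have hTbdd : BddBelow T := ⟨b + c, fun n hn => by
    have := hb ((h n).1 hn); omega⟩
  refine le_antisymm (csInf_le hTbdd hTmem) (le_csInf ⟨_, hTmem⟩ fun n hn => ?_)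
  have := csInf_le ⟨b, hb⟩ ((h n).1 hn)
  omega

private lemma lt_ne_bdd (f : ℤ → ℤ) (P Qv : ℤ) (hP : 0 < P) (hQ : 0 < Qv)
    (h : ∀ n, f (n + P) = f n + Qv) (hmono : Monotone f) (i : ℤ) :
    {n | f n < i}.Nonempty ∧ BddAbove {n | f n < i} := by
  constructor
  · set k := max 0 (f 0 - i + 1) with hk
    have hk0 : 0 ≤ k := le_max_left _ _
    have hk1 : f 0 - i + 1 ≤ k := le_max_right _ _
    have key := qlin_mul f P Qv h k hk0 (-(k * P))
    have e : -(k * P) + k * P = 0 := by ring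
    rw [e] at key
    have hkQ : k ≤ k * Qv := le_mul_of_one_le_right hk0 hQ
    exact ⟨-(k * P), by simp only [Set.mem_setOf_eq]; omega⟩
  · set k := max 0 (i - f 0) with hk
    have hk0 : 0 ≤ k := le_max_left _ _
    have hk1 : i - f 0 ≤ k := le_max_right _ _
    have key := qlin_mul f P Qv h k hk0 0
    have hkQ : k ≤ k * Qv := le_mul_of_one_le_right hk0 hQ
    refine ⟨k * P, fun n hn => ?_⟩
    simp only [Set.mem_setOf_eq] at hn
    by_contra hcon
    push_neg at hcon
    have := hmono (show (0 : ℤ) + k * P ≤ n by omega)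
    omega

private lemma ge_ne_bdd (f : ℤ → ℤ) (P Qv : ℤ) (hP : 0 < P) (hQ : 0 < Qv)
    (h : ∀ n, f (n + P) = f n + Qv) (hmono : Monotone f) (i : ℤ) :
    {n | i ≤ f n}.Nonempty ∧ BddBelow {n | i ≤ f n} := by
  constructor
  · set k := max 0 (i - f 0) with hk
    have hk0 : 0 ≤ k := le_max_left _ _
    have hk1 : i - f 0 ≤ k := le_max_right _ _
    have key := qlin_mul f P Qv h k hk0 0
    have hkQ : k ≤ k * Qv := le_mul_of_one_le_right hk0 hQ
    exact ⟨0 + k * P, by simp only [Set.mem_setOf_eq]; omega⟩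
  · set k := max 0 (f 0 - i + 1) with hk
    have hk0 : 0 ≤ k := le_max_left _ _
    have hk1 : f 0 - i + 1 ≤ k := le_max_right _ _
    have key := qlin_mul f P Qv h k hk0 (-(k * P))
    have e : -(k * P) + k * P = 0 := by ring
    rw [e] at key
    have hkQ : k ≤ k * Qv := le_mul_of_one_le_right hk0 hQ
    refine ⟨-(k * P), fun n hn => ?_⟩
    simp only [Set.mem_setOf_eq] at hn
    by_contra hcon
    push_neg at hcon
    have := hmono (show n ≤ -(k * P) by omega)
    omega

/-- With d, d+d^new, d_p = 2d+d^new non-decreasing and quasi-linear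
(periods P_d, P_{d+dnew}, P_{dp} and defects Q_d, Q_{d+dnew}, Q_{dp}), d(n) → ∞
and d(n)+d^new(n) → −∞, define λ_i via the highest/lowest zeros of Δ_i^±.  Then
for Q = lcm(Q_d, Q_{dp}, Q_{d+dnew}), λ_{i+Q} = λ_i + Q(P_d/Q_d − 4P_{dp}/Q_{dp}
+ P_{d+dnew}/Q_{d+dnew}) for all i ≥ 0. -/
theorem stmt19 (d dnew : ℤ → ℤ)
    (Pd Qd Pdp Qdp Pdn Qdn : ℤ)
    (hPd : 0 < Pd) (hQd : 0 < Qd) (hPdp : 0 < Pdp) (hQdp : 0 < Qdp)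
    (hPdn : 0 < Pdn) (hQdn : 0 < Qdn)
    (hqd : ∀ n : ℤ, d (n + Pd) = d n + Qd)
    (hqdp : ∀ n : ℤ, 2 * d (n + Pdp) + dnew (n + Pdp) = 2 * d n + dnew n + Qdp)
    (hqdn : ∀ n : ℤ, d (n + Pdn) + dnew (n + Pdn) = d n + dnew n + Qdn)
    (hd : Monotone d) (hdn : Monotone fun n => d n + dnew n)
    (hdp : Monotone fun n => 2 * d n + dnew n)
    (htop : Filter.Tendsto d Filter.atTop Filter.atTop)
    (hbot : Filter.Tendsto (fun n => d n + dnew n) Filter.atBot Filter.atBot)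
    (lam : ℕ → ℤ)
    (hlam : ∀ i : ℕ,
      lam i = ((sSup {n : ℤ | d n < (i : ℤ)}
                - sInf {n : ℤ | 2 * (i : ℤ) ≤ 2 * d n + dnew n} + 1)
              - (sSup {n : ℤ | 2 * d n + dnew n + 2 ≤ 2 * (i : ℤ)}
                - sInf {n : ℤ | (i : ℤ) < d n + dnew n} + 1)))
    (Q : ℤ) (hQ : Q = lcm (lcm Qd Qdp) Qdn) :
    ∀ i : ℕ, (lam (i + Q.toNat) : ℝ)
      = (lam i : ℝ)
        + (Q : ℝ) * ((Pd : ℝ) / (Qd : ℝ) - 4 * (Pdp : ℝ) / (Qdp : ℝ)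
            + (Pdn : ℝ) / (Qdn : ℝ)) := by
  -- divisibility and positivity of Q
  have hdvd_d : Qd ∣ Q := hQ ▸ (dvd_lcm_left Qd Qdp).trans (dvd_lcm_left _ _)
  have hdvd_p : Qdp ∣ Q := hQ ▸ (dvd_lcm_right Qd Qdp).trans (dvd_lcm_left _ _)
  have hdvd_n : Qdn ∣ Q := hQ ▸ dvd_lcm_right _ _
  have hQne : Q ≠ 0 := by
    rw [hQ]
    simp only [ne_eq, lcm_eq_zero_iff]
    push_neg
    exact ⟨⟨hQd.ne', hQdp.ne'⟩, hQdn.ne'⟩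
  have hQnn : 0 ≤ Q := by
    rw [hQ, ← Int.coe_lcm]
    exact Int.ofNat_nonneg _
  have hQpos : 0 < Q := lt_of_le_of_ne hQnn (Ne.symm hQne)
  set kd : ℤ := Q / Qd with hkddef
  set kp : ℤ := Q / Qdp with hkpdef
  set kn : ℤ := Q / Qdn with hkndef
  have hkd : kd * Qd = Q := Int.ediv_mul_cancel hdvd_d
  have hkp : kp * Qdp = Q := Int.ediv_mul_cancel hdvd_p
  have hkn : kn * Qdn = Q := Int.ediv_mul_cancel hdvd_n
  have hkd0 : 0 ≤ kd := Int.ediv_nonneg hQnn hQd.le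
  have hkp0 : 0 ≤ kp := Int.ediv_nonneg hQnn hQdp.le
  have hkn0 : 0 ≤ kn := Int.ediv_nonneg hQnn hQdn.le
  -- key translation identities
  have keyd : ∀ n, d n = d (n - kd * Pd) + Q := by
    intro n
    have h1 := qlin_mul d Pd Qd hqd kd hkd0 (n - kd * Pd)
    rw [sub_add_cancel, hkd] at h1
    exact h1
  have keyp : ∀ n, 2 * d n + dnew n = 2 * d (n - 2 * kp * Pdp) + dnew (n - 2 * kp * Pdp) + 2 * Q := by
    intro n
    have h1 := qlin_mul (fun n => 2 * d n + dnew n) Pdp Qdp hqdp (2 * kp)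
      (by omega) (n - 2 * kp * Pdp)
    simp only [sub_add_cancel] at h1
    have e : 2 * kp * Qdp = 2 * Q := by rw [mul_assoc, hkp]
    rw [e] at h1
    exact h1
  have keyn : ∀ n, d n + dnew n = d (n - kn * Pdn) + dnew (n - kn * Pdn) + Q := by
    intro n
    have h1 := qlin_mul (fun n => d n + dnew n) Pdn Qdn hqdn kn hkn0 (n - kn * Pdn)
    simp only [sub_add_cancel] at h1
    rw [hkn] at h1
    exact h1
  intro i
  -- nonemptiness and boundedness of the four sets at level i
  obtain ⟨hAne, hAbdd⟩ := lt_ne_bdd d Pd Qd hPd hQd hqd hd (i : ℤ)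
  obtain ⟨hBne, hBbdd⟩ := ge_ne_bdd (fun n => 2 * d n + dnew n) Pdp Qdp hPdp hQdp hqdp hdp
    (2 * (i : ℤ))
  obtain ⟨hCne, hCbdd⟩ := lt_ne_bdd (fun n => 2 * d n + dnew n) Pdp Qdp hPdp hQdp hqdp hdp
    (2 * (i : ℤ) - 1)
  obtain ⟨hDne, hDbdd⟩ := ge_ne_bdd (fun n => d n + dnew n) Pdn Qdn hPdn hQdn hqdn hdn
    ((i : ℤ) + 1)
  -- rewrite the C and D sets in < / ≤ normal form
  have hCset : ∀ j : ℤ, {n : ℤ | 2 * d n + dnew n + 2 ≤ 2 * j}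
      = {n : ℤ | 2 * d n + dnew n < 2 * j - 1} := by
    intro j; ext n; simp only [Set.mem_setOf_eq]; omega
  have hDset : ∀ j : ℤ, {n : ℤ | j < d n + dnew n} = {n : ℤ | j + 1 ≤ d n + dnew n} := by
    intro j; ext n; simp only [Set.mem_setOf_eq]; omega
  -- the four shift identities
  have hA : sSup {n : ℤ | d n < (i : ℤ) + Q} = sSup {n : ℤ | d n < (i : ℤ)} + kd * Pd :=
    sSup_shift (kd * Pd)
      (fun n => by simp only [Set.mem_setOf_eq]; rw [keyd n]; omega) hAne hAbdd
  have hB : sInf {n : ℤ | 2 * ((i : ℤ) + Q) ≤ 2 * d n + dnew n}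
      = sInf {n : ℤ | 2 * (i : ℤ) ≤ 2 * d n + dnew n} + 2 * kp * Pdp :=
    sInf_shift (2 * kp * Pdp)
      (fun n => by simp only [Set.mem_setOf_eq]; rw [keyp n]; omega) hBne hBbdd
  have hC : sSup {n : ℤ | 2 * d n + dnew n + 2 ≤ 2 * ((i : ℤ) + Q)}
      = sSup {n : ℤ | 2 * d n + dnew n + 2 ≤ 2 * (i : ℤ)} + 2 * kp * Pdp := by
    rw [hCset, hCset]
    exact sSup_shift (2 * kp * Pdp)
      (fun n => by simp only [Set.mem_setOf_eq]; rw [keyp n]; omega) hCne hCbdd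
  have hD : sInf {n : ℤ | (i : ℤ) + Q < d n + dnew n}
      = sInf {n : ℤ | (i : ℤ) < d n + dnew n} + kn * Pdn := by
    rw [hDset, hDset]
    exact sInf_shift (kn * Pdn)
      (fun n => by simp only [Set.mem_setOf_eq]; rw [keyn n]; omega) hDne hDbdd
  -- integer version of the claim
  have h1 := hlam (i + Q.toNat)
  have h2 := hlam i
  push_cast [Int.toNat_of_nonneg hQnn] at h1
  rw [hA, hB, hC, hD] at h1
  have hZ : lam (i + Q.toNat) = lam i + (kd * Pd - 4 * (kp * Pdp) + kn * Pdn) := by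
    rw [h1, h2]; ring
  -- pass to the reals
  have hkdR : (kd : ℝ) * (Qd : ℝ) = (Q : ℝ) := by exact_mod_cast hkd
  have hkpR : (kp : ℝ) * (Qdp : ℝ) = (Q : ℝ) := by exact_mod_cast hkp
  have hknR : (kn : ℝ) * (Qdn : ℝ) = (Q : ℝ) := by exact_mod_cast hkn
  have hQdR : (Qd : ℝ) ≠ 0 := by exact_mod_cast hQd.ne'
  have hQdpR : (Qdp : ℝ) ≠ 0 := by exact_mod_cast hQdp.ne'
  have hQdnR : (Qdn : ℝ) ≠ 0 := by exact_mod_cast hQdn.ne'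
  rw [hZ]
  push_cast
  have e1 : (Q : ℝ) * ((Pd : ℝ) / (Qd : ℝ)) = (kd : ℝ) * (Pd : ℝ) := by
    rw [← hkdR]; field_simp
  have e2 : (Q : ℝ) * (4 * (Pdp : ℝ) / (Qdp : ℝ)) = 4 * ((kp : ℝ) * (Pdp : ℝ)) := by
    rw [← hkpR]; field_simp
  have e3 : (Q : ℝ) * ((Pdn : ℝ) / (Qdn : ℝ)) = (kn : ℝ) * (Pdn : ℝ) := by
    rw [← hknR]; field_simp
  have expand : (Q : ℝ) * ((Pd : ℝ) / (Qd : ℝ) - 4 * (Pdp : ℝ) / (Qdp : ℝ)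
        + (Pdn : ℝ) / (Qdn : ℝ))
      = (Q : ℝ) * ((Pd : ℝ) / (Qd : ℝ)) - (Q : ℝ) * (4 * (Pdp : ℝ) / (Qdp : ℝ))
        + (Q : ℝ) * ((Pdn : ℝ) / (Qdn : ℝ)) := by ring
  rw [expand, e1, e2, e3]
end
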